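/- Let Θ be a partial action of a discrete group G on a C*-algebra A and β ∈ (0,∞). A state φ on A satisfies φ(ab) = N(g)^β φ(ba) for all a ∈ B_{g⁻¹} = D_{g⁻¹}δ_{g⁻¹} and b ∈ B_g = D_g δ_g (for the fixed g and also for g = e) if and only if φ is a trace and φ(θ_g(a)) = N(g)^{-β} φ(a) for all a ∈ D_{g⁻¹}. -/

import Mathlib

open Filter Topology
set_option maxHeartbeats 1000000

lemma approx_unit' {A : Type*} [NormedRing A] [StarRing A] [CStarRing A]
    [NormedAlgebra ℂ A] [CompleteSpace A] [StarModule ℂ A]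
    (I : Submodule ℂ A) (hI : ∀ a : A, ∀ d ∈ I, a * d ∈ I ∧ d * a ∈ I)
    (a : A) (ha : a ∈ I) :
    ∃ e : ℕ → A, (∀ n, e n ∈ I) ∧
      Tendsto (fun n => ‖a * e n - a‖) atTop (𝓝 0) := by
  letI : CStarAlgebra A := { ‹NormedRing A›, ‹StarRing A›, ‹NormedAlgebra ℂ A› with
    complete := CompleteSpace.complete
    norm_mul_self_le := CStarRing.norm_mul_self_le
    star_smul := star_smul }
  set x : A := star a * a with hx
  have hxI : x ∈ I := (hI (star a) a ha).1
  have hxsa : IsSelfAdjoint x := IsSelfAdjoint.star_mul_self a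
  have hspec : ∀ t ∈ spectrum ℝ x, 0 ≤ t := spectrum_star_mul_self_nonneg
  set ε : ℕ → ℝ := fun n => ((n : ℝ) + 1)⁻¹ with hε
  have hεpos : ∀ n, 0 < ε n := fun n => by positivity
  have hcont : ∀ n, ContinuousOn (fun t : ℝ => (t + ε n)⁻¹) (spectrum ℝ x) := by
    intro n
    apply ContinuousOn.inv₀ (by fun_prop)
    intro t ht
    have h1 := hspec t ht
    have h2 := hεpos n
    positivity
  have hcont2 : ∀ n, ContinuousOn (fun t : ℝ => t * (t + ε n)⁻¹) (spectrum ℝ x) :=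
    fun n => continuousOn_id.mul (hcont n)
  have hcont3 : ∀ n, ContinuousOn (fun t : ℝ => t * (t + ε n)⁻¹ - 1) (spectrum ℝ x) :=
    fun n => (hcont2 n).sub continuousOn_const
  set e : ℕ → A := fun n => cfc (fun t : ℝ => t * (t + ε n)⁻¹) x with he
  have heI : ∀ n, e n ∈ I := by
    intro n
    have h1 : e n = x * cfc (fun t : ℝ => (t + ε n)⁻¹) x := by
      have h0 := cfc_mul (fun t : ℝ => t) (fun t : ℝ => (t + ε n)⁻¹) x (by fun_prop) (hcont n)
      rw [cfc_id' ℝ x] at h0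
      exact h0
    rw [h1]
    exact (hI (cfc (fun t : ℝ => (t + ε n)⁻¹) x) x hxI).2
  refine ⟨e, heI, ?_⟩
  have hb : ∀ n, ‖a * e n - a‖ ≤ Real.sqrt (ε n) := by
    intro n
    have hesa : IsSelfAdjoint (e n) := cfc_predicate _ x
    have hsub : e n - 1 = cfc (fun t : ℝ => t * (t + ε n)⁻¹ - 1) x := by
      rw [cfc_sub _ _ x (hcont2 n) continuousOn_const, cfc_const_one ℝ x, he]
    set u : A := a * e n - a with hu
    have hu' : u = a * (e n - 1) := by rw [hu, mul_sub, mul_one]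
    have hstaru : star u = (e n - 1) * star a := by
      rw [hu', star_mul, (hesa.sub (IsSelfAdjoint.one (R := A))).star_eq]
    have hkey : star u * u = cfc (fun t : ℝ => (t * (t + ε n)⁻¹ - 1) * t * (t * (t + ε n)⁻¹ - 1)) x := by
      have h2 : star u * u = (e n - 1) * x * (e n - 1) := by
        rw [hstaru, hu', hx]; simp only [mul_assoc]
      have e1 : cfc (fun t : ℝ => (t * (t + ε n)⁻¹ - 1) * t * (t * (t + ε n)⁻¹ - 1)) x
          = cfc (fun t : ℝ => (t * (t + ε n)⁻¹ - 1) * t) x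
            * cfc (fun t : ℝ => t * (t + ε n)⁻¹ - 1) x :=
        cfc_mul _ _ x ((hcont3 n).mul (by fun_prop)) (hcont3 n)
      have e2 : cfc (fun t : ℝ => (t * (t + ε n)⁻¹ - 1) * t) x
          = cfc (fun t : ℝ => t * (t + ε n)⁻¹ - 1) x * cfc (fun t : ℝ => t) x :=
        cfc_mul _ _ x (hcont3 n) (by fun_prop)
      rw [h2, hsub, e1, e2, cfc_id' ℝ x]
    have hnorm : ‖star u * u‖ ≤ ε n := by
      rw [hkey]
      apply norm_cfc_le (hεpos n).le
      intro t ht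
      have ht0 := hspec t ht
      have hεn := hεpos n
      have htε : t + ε n ≠ 0 := by positivity
      have hf : t * (t + ε n)⁻¹ - 1 = -(ε n * (t + ε n)⁻¹) := by
        field_simp
        ring
      rw [hf, Real.norm_eq_abs]
      have hval : -(ε n * (t + ε n)⁻¹) * t * -(ε n * (t + ε n)⁻¹)
          = t * (ε n)^2 * ((t + ε n)⁻¹)^2 := by ring
      rw [hval, abs_of_nonneg (by positivity)]
      have h1 : t * (ε n)^2 * ((t + ε n)⁻¹)^2 = ε n * (t * ε n / (t + ε n)^2) := by
        field_simp
      rw [h1]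
      have h2 : t * ε n / (t + ε n)^2 ≤ 1 := by
        rw [div_le_one (by positivity)]
        nlinarith [sq_nonneg t, sq_nonneg (ε n)]
      calc ε n * (t * ε n / (t + ε n)^2) ≤ ε n * 1 := by
            exact mul_le_mul_of_nonneg_left h2 hεn.le
        _ = ε n := mul_one _
    calc ‖u‖ = Real.sqrt (‖u‖ * ‖u‖) := (Real.sqrt_mul_self (norm_nonneg u)).symm
      _ ≤ Real.sqrt (ε n) := Real.sqrt_le_sqrt
          (by rw [← CStarRing.norm_star_mul_self]; exact hnorm)
  apply squeeze_zero (fun n => norm_nonneg _) hb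
  have h0 : Tendsto ε atTop (𝓝 0) := by
    simpa [hε, one_div] using (tendsto_one_div_add_atTop_nhds_zero_nat : Tendsto (fun n : ℕ => 1 / ((n : ℝ) + 1)) atTop (𝓝 0))
  have := (Real.continuous_sqrt.tendsto 0).comp h0
  simpa [Function.comp_def] using this



/-- Let `Θ = ({D_g},{θ_g})` be a partial action of a discrete group `G` on a
C*-algebra `A` and `β ∈ (0,∞)`.  In the crossed product grading `B_g = D_g δ_g`, a state `φ`
on `A` satisfies `φ(ab) = N(g)^β φ(ba)` for all `a ∈ B_{g⁻¹}`, `b ∈ B_g` — concretely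
`φ(θ_{g⁻¹}(θ_g(a)b)) = N(g)^β φ(θ_g(θ_{g⁻¹}(b)a))` for `a ∈ D_{g⁻¹}`, `b ∈ D_g` —
for the fixed `g` and also for `g = e` (the latter being the trace property),
if and only if `φ` is a trace and `φ(θ_g(a)) = N(g)^{-β} φ(a)` for all `a ∈ D_{g⁻¹}`. -/
theorem stmt_5 {G : Type*} [Group G] {A : Type*} [NormedRing A] [StarRing A] [CStarRing A]
    [NormedAlgebra ℂ A] [CompleteSpace A] [StarModule ℂ A]
    (D : G → Submodule ℂ A)
    (hDclosed : ∀ g, IsClosed (D g : Set A))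
    (hDideal : ∀ g, ∀ a : A, ∀ d ∈ D g, a * d ∈ D g ∧ d * a ∈ D g)
    (hDstar : ∀ g, ∀ d ∈ D g, star d ∈ D g)
    (hDe : D 1 = ⊤)
    (θ : G → A →ₗ[ℂ] A)
    (hθe : ∀ a, θ 1 a = a)
    (hθmap : ∀ g, ∀ a ∈ D g⁻¹, θ g a ∈ D g)
    (hθmul : ∀ g, ∀ a ∈ D g⁻¹, ∀ b ∈ D g⁻¹, θ g (a * b) = θ g a * θ g b)
    (hθstar : ∀ g, ∀ a ∈ D g⁻¹, θ g (star a) = star (θ g a))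
    (hθiso : ∀ g, ∀ a ∈ D g⁻¹, ‖θ g a‖ = ‖a‖)
    (hθdom : ∀ g h, (D g⁻¹ ⊓ D h).map (θ g) = D g ⊓ D (g * h))
    (hθcomp : ∀ g h, ∀ a, a ∈ D h⁻¹ → a ∈ D (h⁻¹ * g⁻¹) → θ g (θ h a) = θ (g * h) a)
    (N : G → ℝ) (hNpos : ∀ g, 0 < N g) (hNmul : ∀ g h, N (g * h) = N g * N h)
    (β : ℝ) (hβ : 0 < β)
    (φ : A →L[ℂ] ℂ) (hφnorm : ‖φ‖ = 1)
    (hφpos : ∀ a : A, 0 ≤ (φ (star a * a)).re ∧ (φ (star a * a)).im = 0)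
    (g : G) :
    ((∀ a ∈ D g⁻¹, ∀ b ∈ D g,
        φ (θ g⁻¹ (θ g a * b)) = ((((N g) ^ β : ℝ)) : ℂ) * φ (θ g (θ g⁻¹ b * a))) ∧
      (∀ a b : A, φ (a * b) = φ (b * a)))
    ↔ ((∀ a b : A, φ (a * b) = φ (b * a)) ∧
        ∀ a ∈ D g⁻¹, φ (θ g a) = ((((N g) ^ (-β) : ℝ)) : ℂ) * φ a) := by
  have hNg := hNpos g
  set c : ℂ := ((N g ^ (-β) : ℝ) : ℂ) with hc
  set c' : ℂ := ((N g ^ β : ℝ) : ℂ) with hc'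
  have hcc' : c' * c = 1 := by
    rw [hc, hc', ← Complex.ofReal_mul, ← Real.rpow_add hNg]
    norm_num
  have hcc'' : c * c' = 1 := by rw [mul_comm]; exact hcc'
  have hback : ∀ p ∈ D g⁻¹, θ g⁻¹ (θ g p) = p := by
    intro p hp
    rw [hθcomp g⁻¹ g p hp (by simp [hDe]), inv_mul_cancel, hθe]
  have hfwd : ∀ y ∈ D g, θ g (θ g⁻¹ y) = y := by
    intro y hy
    rw [hθcomp g g⁻¹ y (by simpa using hy) (by simp [hDe]), mul_inv_cancel, hθe]
  constructor
  · rintro ⟨h1, htr⟩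
    refine ⟨htr, ?_⟩
    intro a ha
    have key : ∀ p ∈ D g⁻¹, ∀ q ∈ D g⁻¹, φ (θ g (p * q)) = c * φ (p * q) := by
      intro p hp q hq
      have h2 := h1 q hq (θ g p) (hθmap g p hp)
      have hqp : q * p ∈ D g⁻¹ := (hDideal g⁻¹ q p hp).1
      have hmul : θ g q * θ g p = θ g (q * p) := (hθmul g q hq p hp).symm
      rw [hmul, hback (q * p) hqp, hback p hp] at h2
      -- h2 : φ (q * p) = c' * φ (θ g (p * q))
      calc φ (θ g (p * q)) = (c * c') * φ (θ g (p * q)) := by rw [hcc'', one_mul]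
        _ = c * φ (q * p) := by rw [mul_assoc, ← h2]
        _ = c * φ (p * q) := by rw [htr q p]
    obtain ⟨e, heI, hlim⟩ := approx_unit' (D g⁻¹) (hDideal g⁻¹) a ha
    have h5 : ∀ n, φ (θ g (a * e n)) = c * φ (a * e n) :=
      fun n => key a ha (e n) (heI n)
    have hlima : Tendsto (fun n => a * e n) atTop (𝓝 a) := by
      rw [tendsto_iff_norm_sub_tendsto_zero]
      exact hlim
    have hlim1 : Tendsto (fun n => φ (a * e n)) atTop (𝓝 (φ a)) :=
      (φ.continuous.tendsto a).comp hlima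
    have hlim2 : Tendsto (fun n => φ (θ g (a * e n))) atTop (𝓝 (φ (θ g a))) := by
      rw [tendsto_iff_norm_sub_tendsto_zero]
      refine squeeze_zero (fun n => norm_nonneg _) (fun n => ?_) hlim
      have hmem : a * e n - a ∈ D g⁻¹ :=
        Submodule.sub_mem _ ((hDideal g⁻¹ a (e n) (heI n)).1) ha
      calc ‖φ (θ g (a * e n)) - φ (θ g a)‖ = ‖φ (θ g (a * e n) - θ g a)‖ := by
            rw [map_sub]
        _ = ‖φ (θ g (a * e n - a))‖ := by rw [map_sub (θ g)]
        _ ≤ ‖φ‖ * ‖θ g (a * e n - a)‖ := φ.le_opNorm _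
        _ = ‖a * e n - a‖ := by rw [hφnorm, one_mul, hθiso g _ hmem]
    have hlim3 : Tendsto (fun n => φ (θ g (a * e n))) atTop (𝓝 (c * φ a)) := by
      simp only [h5]
      exact hlim1.const_mul c
    exact tendsto_nhds_unique hlim2 hlim3
  · rintro ⟨htr, hsc⟩
    refine ⟨?_, htr⟩
    intro a ha b hb
    have hbg : ∀ y ∈ D g, φ (θ g⁻¹ y) = c' * φ y := by
      intro y hy
      have hy' : θ g⁻¹ y ∈ D g⁻¹ := hθmap g⁻¹ y (by simpa using hy)
      have h3 := hsc (θ g⁻¹ y) hy'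
      rw [hfwd y hy] at h3
      calc φ (θ g⁻¹ y) = (c' * c) * φ (θ g⁻¹ y) := by rw [hcc', one_mul]
        _ = c' * φ y := by rw [mul_assoc, ← h3]
    have hθa : θ g a ∈ D g := hθmap g a ha
    have hab : θ g a * b ∈ D g := (hDideal g (θ g a) b hb).1
    have hba : b * θ g a ∈ D g := (hDideal g b (θ g a) hθa).1
    have hmem2 : θ g⁻¹ b * a ∈ D g⁻¹ := (hDideal g⁻¹ (θ g⁻¹ b) a ha).1
    have hsplit : θ g⁻¹ (b * θ g a) = θ g⁻¹ b * a := by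
      rw [hθmul g⁻¹ b (by simpa using hb) (θ g a) (by simpa using hθa), hback a ha]
    calc φ (θ g⁻¹ (θ g a * b)) = c' * φ (θ g a * b) := hbg _ hab
      _ = c' * φ (b * θ g a) := by rw [htr]
      _ = c' * ((c * c') * φ (b * θ g a)) := by rw [hcc'', one_mul]
      _ = c' * (c * φ (θ g⁻¹ (b * θ g a))) := by rw [mul_assoc c c', ← hbg _ hba]
      _ = c' * (c * φ (θ g⁻¹ b * a)) := by rw [hsplit]
      _ = c' * φ (θ g (θ g⁻¹ b * a)) := by rw [← hsc _ hmem2]
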